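/- There is a bijection between partial Motzkin paths of length n ending at height h equipped with a choice of elevation level p ∈ {0,1,...,h}, and free Motzkin paths of length n; moreover under this bijection a pair (P, p) maps to a free Motzkin path whose number of down steps equals the number of down steps of P plus p. -/

import Mathlib

/-- A Motzkin step: up, down, or horizontal. -/
inductive Step | U | D | H
deriving DecidableEq

instance : Fintype Step :=
  ⟨{Step.U, Step.D, Step.H}, fun x => by cases x <;> simp⟩

/-- The height change of one step. -/
def Step.val : Step → ℤ
  | Step.U => 1
  | Step.D => -1
  | Step.H => 0

/-- The weight of a step: up steps weigh `1`, down steps `t`, horizontal steps `k`. -/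
def Step.wt (k t : ℕ) : Step → ℕ
  | Step.U => 1
  | Step.D => t
  | Step.H => k

/-- The height of the path `p` after its first `m` steps. -/
def pathHeight {n : ℕ} (p : Fin n → Step) (m : ℕ) : ℤ :=
  ∑ i ∈ Finset.univ.filter (fun i : Fin n => (i : ℕ) < m), (p i).val

/-- A partial Motzkin path: never goes below the x-axis. -/
def IsPartialMotzkin {n : ℕ} (p : Fin n → Step) : Prop :=
  ∀ m ≤ n, 0 ≤ pathHeight p m

/-- A (complete) Motzkin path: never below the x-axis and ends on the x-axis. -/
def IsMotzkin {n : ℕ} (p : Fin n → Step) : Prop :=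
  IsPartialMotzkin p ∧ pathHeight p n = 0

instance {n : ℕ} (p : Fin n → Step) : Decidable (IsPartialMotzkin p) :=
  Nat.decidableBallLE n _

instance {n : ℕ} (p : Fin n → Step) : Decidable (IsMotzkin p) :=
  inferInstanceAs (Decidable (_ ∧ _))

/-- The weight of a weighted Motzkin path. -/
def pathWt {n : ℕ} (k t : ℕ) (p : Fin n → Step) : ℕ := ∏ i, (p i).wt k t

/-- Sum of the weights of all `(k,t)`-Motzkin paths of length `n`. -/
def motzkinWt (k t n : ℕ) : ℕ :=
  ∑ p ∈ Finset.univ.filter (fun p : Fin n → Step => IsMotzkin p), pathWt k t p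

/-- Sum of the weights of all partial `(k,t)`-Motzkin paths of length `n`
ending at height `h`. -/
def partialWt (k t n h : ℕ) : ℕ :=
  ∑ p ∈ Finset.univ.filter
      (fun p : Fin n → Step => IsPartialMotzkin p ∧ pathHeight p n = (h : ℤ)),
    pathWt k t p

/-- The number of down steps of a path. -/
def downCount {n : ℕ} (p : Fin n → Step) : ℕ :=
  (Finset.univ.filter fun i => p i = Step.D).card

lemma pathHeight_eq {n : ℕ} (p : Fin n → Step) (m : ℕ) :
    pathHeight p m = ∑ i : Fin n, if (i : ℕ) < m then (p i).val else 0 := by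
  rw [pathHeight, Finset.sum_filter]

lemma pathHeight_snoc {n : ℕ} (p' : Fin n → Step) (s : Step) (m : ℕ) :
    pathHeight (Fin.snoc p' s) m = pathHeight p' m + if n < m then s.val else 0 := by
  rw [pathHeight_eq, pathHeight_eq, Fin.sum_univ_castSucc]
  simp

lemma pathHeight_stable {n : ℕ} (p : Fin n → Step) {m : ℕ} (h : n ≤ m) :
    pathHeight p m = pathHeight p n := by
  rw [pathHeight_eq, pathHeight_eq]
  refine Finset.sum_congr rfl fun i _ => ?_
  have h1 : (i : ℕ) < m := lt_of_lt_of_le i.isLt h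
  simp [h1, i.isLt]

lemma pathHeight_snoc_succ {n : ℕ} (p' : Fin n → Step) (s : Step) :
    pathHeight (Fin.snoc p' s) (n + 1) = pathHeight p' n + s.val := by
  rw [pathHeight_snoc, pathHeight_stable p' (Nat.le_succ n)]
  simp

lemma pathHeight_init {n : ℕ} (P : Fin (n + 1) → Step) {m : ℕ} (hm : m ≤ n) :
    pathHeight (Fin.init P) m = pathHeight P m := by
  conv_rhs => rw [← Fin.snoc_init_self P]
  rw [pathHeight_snoc]
  simp [Nat.not_lt.mpr hm]

lemma pathHeight_last {n : ℕ} (P : Fin (n + 1) → Step) :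
    pathHeight P (n + 1) = pathHeight (Fin.init P) n + (P (Fin.last n)).val := by
  conv_lhs => rw [← Fin.snoc_init_self P]
  rw [pathHeight_snoc_succ]

lemma isPartialMotzkin_init {n : ℕ} {P : Fin (n + 1) → Step} (h : IsPartialMotzkin P) :
    IsPartialMotzkin (Fin.init P) := by
  intro m hm
  rw [pathHeight_init P hm]
  exact h m (le_trans hm (Nat.le_succ n))

lemma isPartialMotzkin_snoc {n : ℕ} {p' : Fin n → Step} {s : Step}
    (h1 : IsPartialMotzkin p') (h2 : 0 ≤ pathHeight p' n + s.val) :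
    IsPartialMotzkin (Fin.snoc p' s) := by
  intro m hm
  rcases Nat.lt_or_ge m (n + 1) with h | h
  · have hm' : m ≤ n := Nat.lt_succ_iff.mp h
    rw [pathHeight_snoc]
    simp only [Nat.not_lt.mpr hm', if_false, add_zero]
    exact h1 m hm'
  · have : m = n + 1 := le_antisymm hm h
    subst this
    rw [pathHeight_snoc_succ]
    exact h2

lemma downCount_snoc {n : ℕ} (p' : Fin n → Step) (s : Step) :
    downCount (Fin.snoc p' s) = downCount p' + if s = Step.D then 1 else 0 := by
  unfold downCount
  rw [Finset.card_filter, Finset.card_filter, Fin.sum_univ_castSucc]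
  simp

lemma downCount_eq_init {n : ℕ} (P : Fin (n + 1) → Step) :
    downCount P = downCount (Fin.init P) + if P (Fin.last n) = Step.D then 1 else 0 := by
  conv_lhs => rw [← Fin.snoc_init_self P]
  rw [downCount_snoc]

abbrev Pm (n : ℕ) : Type :=
  {q : (Fin n → Step) × ℕ // IsPartialMotzkin q.1 ∧ (q.2 : ℤ) ≤ pathHeight q.1 n}

lemma mem_fwd {n : ℕ} {P : Fin (n + 1) → Step} (p : ℕ) (hq : IsPartialMotzkin P) :
    IsPartialMotzkin (Fin.init P) ∧
      ((min p (pathHeight (Fin.init P) n).toNat : ℕ) : ℤ) ≤ pathHeight (Fin.init P) n := by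
  have h1 := isPartialMotzkin_init hq
  refine ⟨h1, ?_⟩
  have h0 : 0 ≤ pathHeight (Fin.init P) n := h1 n le_rfl
  have h2 : ((min p (pathHeight (Fin.init P) n).toNat : ℕ) : ℤ)
      ≤ ((pathHeight (Fin.init P) n).toNat : ℤ) := by
    exact_mod_cast min_le_right _ _
  rwa [Int.toNat_of_nonneg h0] at h2

lemma mem_bU {n : ℕ} {P' : Fin n → Step} {p : ℕ}
    (h : IsPartialMotzkin P' ∧ (p : ℤ) ≤ pathHeight P' n) :
    IsPartialMotzkin (Fin.snoc P' Step.U) ∧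
      (p : ℤ) ≤ pathHeight (Fin.snoc P' Step.U) (n + 1) := by
  have h0 : 0 ≤ pathHeight P' n := h.1 n le_rfl
  refine ⟨isPartialMotzkin_snoc h.1 (by simp [Step.val]; omega), ?_⟩
  rw [pathHeight_snoc_succ]
  simp [Step.val]
  omega

lemma mem_bU' {n : ℕ} {P' : Fin n → Step} {p : ℕ}
    (h : IsPartialMotzkin P' ∧ (p : ℤ) ≤ pathHeight P' n) :
    IsPartialMotzkin (Fin.snoc P' Step.U) ∧
      ((p + 1 : ℕ) : ℤ) ≤ pathHeight (Fin.snoc P' Step.U) (n + 1) := by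
  have h0 : 0 ≤ pathHeight P' n := h.1 n le_rfl
  have h2 := h.2
  refine ⟨isPartialMotzkin_snoc h.1 (by simp [Step.val]; omega), ?_⟩
  rw [pathHeight_snoc_succ]
  simp [Step.val]
  omega

lemma mem_bH {n : ℕ} {P' : Fin n → Step} {p : ℕ}
    (h : IsPartialMotzkin P' ∧ (p : ℤ) ≤ pathHeight P' n) :
    IsPartialMotzkin (Fin.snoc P' Step.H) ∧
      (p : ℤ) ≤ pathHeight (Fin.snoc P' Step.H) (n + 1) := by
  have h0 : 0 ≤ pathHeight P' n := h.1 n le_rfl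
  refine ⟨isPartialMotzkin_snoc h.1 (by simp [Step.val]; omega), ?_⟩
  rw [pathHeight_snoc_succ]
  simp [Step.val]
  exact h.2

lemma mem_bD {n : ℕ} {P' : Fin n → Step} {p : ℕ}
    (h : IsPartialMotzkin P' ∧ (p : ℤ) ≤ pathHeight P' n)
    (hne : ¬ ((p : ℤ) = pathHeight P' n)) :
    IsPartialMotzkin (Fin.snoc P' Step.D) ∧
      (p : ℤ) ≤ pathHeight (Fin.snoc P' Step.D) (n + 1) := by
  have h2 := h.2
  have hlt : (p : ℤ) < pathHeight P' n := lt_of_le_of_ne h2 hne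
  have h1 : 0 ≤ pathHeight P' n + Step.D.val := by simp [Step.val]; omega
  refine ⟨isPartialMotzkin_snoc h.1 h1, ?_⟩
  rw [pathHeight_snoc_succ]
  simp [Step.val]
  omega

def stepFwd {n : ℕ} (e : Pm n ≃ (Fin n → Step)) (q : Pm (n + 1)) : Fin (n + 1) → Step :=
  match q.1.1 (Fin.last n) with
  | Step.H =>
      Fin.snoc (e ⟨(Fin.init q.1.1, min q.1.2 (pathHeight (Fin.init q.1.1) n).toNat),
        mem_fwd _ q.2.1⟩) Step.H
  | Step.U =>
      if (q.1.2 : ℤ) ≤ pathHeight (Fin.init q.1.1) n then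
        Fin.snoc (e ⟨(Fin.init q.1.1, min q.1.2 (pathHeight (Fin.init q.1.1) n).toNat),
          mem_fwd _ q.2.1⟩) Step.U
      else
        Fin.snoc (e ⟨(Fin.init q.1.1, min (q.1.2 - 1) (pathHeight (Fin.init q.1.1) n).toNat),
          mem_fwd _ q.2.1⟩) Step.D
  | Step.D =>
      Fin.snoc (e ⟨(Fin.init q.1.1, min q.1.2 (pathHeight (Fin.init q.1.1) n).toNat),
        mem_fwd _ q.2.1⟩) Step.D

def stepBwd {n : ℕ} (e : Pm n ≃ (Fin n → Step)) (w : Fin (n + 1) → Step) : Pm (n + 1) :=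
  match w (Fin.last n) with
  | Step.U => ⟨(Fin.snoc (e.symm (Fin.init w)).1.1 Step.U, (e.symm (Fin.init w)).1.2),
      mem_bU (e.symm (Fin.init w)).2⟩
  | Step.H => ⟨(Fin.snoc (e.symm (Fin.init w)).1.1 Step.H, (e.symm (Fin.init w)).1.2),
      mem_bH (e.symm (Fin.init w)).2⟩
  | Step.D =>
      if hc : ((e.symm (Fin.init w)).1.2 : ℤ) = pathHeight (e.symm (Fin.init w)).1.1 n then
        ⟨(Fin.snoc (e.symm (Fin.init w)).1.1 Step.U, (e.symm (Fin.init w)).1.2 + 1),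
          mem_bU' (e.symm (Fin.init w)).2⟩
      else
        ⟨(Fin.snoc (e.symm (Fin.init w)).1.1 Step.D, (e.symm (Fin.init w)).1.2),
          mem_bD (e.symm (Fin.init w)).2 hc⟩

lemma stepFwd_H {n : ℕ} (e : Pm n ≃ (Fin n → Step)) (q : Pm (n + 1))
    (hs : q.1.1 (Fin.last n) = Step.H) :
    stepFwd e q = Fin.snoc (e ⟨(Fin.init q.1.1,
      min q.1.2 (pathHeight (Fin.init q.1.1) n).toNat), mem_fwd _ q.2.1⟩) Step.H := by
  unfold stepFwd
  split <;> simp_all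

lemma stepFwd_U_le {n : ℕ} (e : Pm n ≃ (Fin n → Step)) (q : Pm (n + 1))
    (hs : q.1.1 (Fin.last n) = Step.U) (hle : (q.1.2 : ℤ) ≤ pathHeight (Fin.init q.1.1) n) :
    stepFwd e q = Fin.snoc (e ⟨(Fin.init q.1.1,
      min q.1.2 (pathHeight (Fin.init q.1.1) n).toNat), mem_fwd _ q.2.1⟩) Step.U := by
  unfold stepFwd
  split <;> simp_all

lemma stepFwd_U_gt {n : ℕ} (e : Pm n ≃ (Fin n → Step)) (q : Pm (n + 1))
    (hs : q.1.1 (Fin.last n) = Step.U) (hle : ¬ ((q.1.2 : ℤ) ≤ pathHeight (Fin.init q.1.1) n)) :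
    stepFwd e q = Fin.snoc (e ⟨(Fin.init q.1.1,
      min (q.1.2 - 1) (pathHeight (Fin.init q.1.1) n).toNat), mem_fwd _ q.2.1⟩) Step.D := by
  unfold stepFwd
  split <;> simp_all

lemma stepFwd_D {n : ℕ} (e : Pm n ≃ (Fin n → Step)) (q : Pm (n + 1))
    (hs : q.1.1 (Fin.last n) = Step.D) :
    stepFwd e q = Fin.snoc (e ⟨(Fin.init q.1.1,
      min q.1.2 (pathHeight (Fin.init q.1.1) n).toNat), mem_fwd _ q.2.1⟩) Step.D := by
  unfold stepFwd
  split <;> simp_all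

lemma stepBwd_U {n : ℕ} (e : Pm n ≃ (Fin n → Step)) (w : Fin (n + 1) → Step)
    (hs : w (Fin.last n) = Step.U) :
    stepBwd e w = ⟨(Fin.snoc (e.symm (Fin.init w)).1.1 Step.U, (e.symm (Fin.init w)).1.2),
      mem_bU (e.symm (Fin.init w)).2⟩ := by
  unfold stepBwd
  split <;> simp_all

lemma stepBwd_H {n : ℕ} (e : Pm n ≃ (Fin n → Step)) (w : Fin (n + 1) → Step)
    (hs : w (Fin.last n) = Step.H) :
    stepBwd e w = ⟨(Fin.snoc (e.symm (Fin.init w)).1.1 Step.H, (e.symm (Fin.init w)).1.2),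
      mem_bH (e.symm (Fin.init w)).2⟩ := by
  unfold stepBwd
  split <;> simp_all

lemma stepBwd_D_eq {n : ℕ} (e : Pm n ≃ (Fin n → Step)) (w : Fin (n + 1) → Step)
    (hs : w (Fin.last n) = Step.D)
    (hc : ((e.symm (Fin.init w)).1.2 : ℤ) = pathHeight (e.symm (Fin.init w)).1.1 n) :
    stepBwd e w = ⟨(Fin.snoc (e.symm (Fin.init w)).1.1 Step.U, (e.symm (Fin.init w)).1.2 + 1),
      mem_bU' (e.symm (Fin.init w)).2⟩ := by
  unfold stepBwd
  split <;> simp_all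

lemma stepBwd_D_ne {n : ℕ} (e : Pm n ≃ (Fin n → Step)) (w : Fin (n + 1) → Step)
    (hs : w (Fin.last n) = Step.D)
    (hc : ¬ (((e.symm (Fin.init w)).1.2 : ℤ) = pathHeight (e.symm (Fin.init w)).1.1 n)) :
    stepBwd e w = ⟨(Fin.snoc (e.symm (Fin.init w)).1.1 Step.D, (e.symm (Fin.init w)).1.2),
      mem_bD (e.symm (Fin.init w)).2 hc⟩ := by
  unfold stepBwd
  split <;> simp_all

lemma subtype_eta {n : ℕ} (x : Pm n) (h) : (⟨(x.1.1, x.1.2), h⟩ : Pm n) = x :=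
  Subtype.ext rfl

lemma stepBwd_stepFwd {n : ℕ} (e : Pm n ≃ (Fin n → Step)) (q : Pm (n + 1)) :
    stepBwd e (stepFwd e q) = q := by
  have hh := q.2.2
  rw [pathHeight_last] at hh
  have h0 : 0 ≤ pathHeight (Fin.init q.1.1) n := (isPartialMotzkin_init q.2.1) n le_rfl
  cases hs : q.1.1 (Fin.last n) with
  | H =>
    rw [hs] at hh
    simp only [Step.val, add_zero] at hh
    have hmin : min q.1.2 (pathHeight (Fin.init q.1.1) n).toNat = q.1.2 := by omega
    rw [stepFwd_H e q hs, stepBwd_H e _ (by simp)]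
    apply Subtype.ext
    simp only [Fin.init_snoc, Equiv.symm_apply_apply, hmin]
    rw [← hs, Fin.snoc_init_self]
  | U =>
    by_cases hle : (q.1.2 : ℤ) ≤ pathHeight (Fin.init q.1.1) n
    · have hmin : min q.1.2 (pathHeight (Fin.init q.1.1) n).toNat = q.1.2 := by omega
      rw [stepFwd_U_le e q hs hle, stepBwd_U e _ (by simp)]
      apply Subtype.ext
      simp only [Fin.init_snoc, Equiv.symm_apply_apply, hmin]
      rw [← hs, Fin.snoc_init_self]
    · rw [hs] at hh
      simp only [Step.val] at hh
      have hp1 : 1 ≤ q.1.2 := by omega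
      have hmin : min (q.1.2 - 1) (pathHeight (Fin.init q.1.1) n).toNat = q.1.2 - 1 := by omega
      rw [stepFwd_U_gt e q hs hle,
        stepBwd_D_eq e _ (by simp)
          (by simp only [Fin.init_snoc, Equiv.symm_apply_apply, hmin]; omega)]
      apply Subtype.ext
      simp only [Fin.init_snoc, Equiv.symm_apply_apply, hmin]
      have hb : q.1.2 - 1 + 1 = q.1.2 := by omega
      rw [hb, ← hs, Fin.snoc_init_self]
  | D =>
    rw [hs] at hh
    simp only [Step.val] at hh
    have hmin : min q.1.2 (pathHeight (Fin.init q.1.1) n).toNat = q.1.2 := by omega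
    rw [stepFwd_D e q hs,
      stepBwd_D_ne e _ (by simp)
        (by simp only [Fin.init_snoc, Equiv.symm_apply_apply, hmin]; omega)]
    apply Subtype.ext
    simp only [Fin.init_snoc, Equiv.symm_apply_apply, hmin]
    rw [← hs, Fin.snoc_init_self]

lemma stepFwd_stepBwd {n : ℕ} (e : Pm n ≃ (Fin n → Step)) (w : Fin (n + 1) → Step) :
    stepFwd e (stepBwd e w) = w := by
  have hp := (e.symm (Fin.init w)).2
  have h0 : 0 ≤ pathHeight (e.symm (Fin.init w)).1.1 n := hp.1 n le_rfl
  have hple := hp.2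
  cases hs : w (Fin.last n) with
  | U =>
    rw [stepBwd_U e w hs,
      stepFwd_U_le e _ (by simp) (by simp only [Fin.init_snoc]; exact hple)]
    have hmin : min (e.symm (Fin.init w)).1.2 (pathHeight (e.symm (Fin.init w)).1.1 n).toNat
        = (e.symm (Fin.init w)).1.2 := by omega
    simp only [Fin.init_snoc, hmin]
    rw [subtype_eta, Equiv.apply_symm_apply, ← hs, Fin.snoc_init_self]
  | H =>
    rw [stepBwd_H e w hs, stepFwd_H e _ (by simp)]
    have hmin : min (e.symm (Fin.init w)).1.2 (pathHeight (e.symm (Fin.init w)).1.1 n).toNat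
        = (e.symm (Fin.init w)).1.2 := by omega
    simp only [Fin.init_snoc, hmin]
    rw [subtype_eta, Equiv.apply_symm_apply, ← hs, Fin.snoc_init_self]
  | D =>
    by_cases hc : ((e.symm (Fin.init w)).1.2 : ℤ) = pathHeight (e.symm (Fin.init w)).1.1 n
    · rw [stepBwd_D_eq e w hs hc,
        stepFwd_U_gt e _ (by simp) (by simp only [Fin.init_snoc]; push_cast; omega)]
      have hmin : min ((e.symm (Fin.init w)).1.2 + 1 - 1)
          (pathHeight (e.symm (Fin.init w)).1.1 n).toNat = (e.symm (Fin.init w)).1.2 := by omega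
      simp only [Fin.init_snoc, hmin]
      rw [subtype_eta, Equiv.apply_symm_apply, ← hs, Fin.snoc_init_self]
    · rw [stepBwd_D_ne e w hs hc, stepFwd_D e _ (by simp)]
      have hmin : min (e.symm (Fin.init w)).1.2 (pathHeight (e.symm (Fin.init w)).1.1 n).toNat
          = (e.symm (Fin.init w)).1.2 := by omega
      simp only [Fin.init_snoc, hmin]
      rw [subtype_eta, Equiv.apply_symm_apply, ← hs, Fin.snoc_init_self]

lemma downCount_stepFwd {n : ℕ} (e : Pm n ≃ (Fin n → Step))
    (he : ∀ q, downCount (e q) = downCount q.1.1 + q.1.2) (q : Pm (n + 1)) :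
    downCount (stepFwd e q) = downCount q.1.1 + q.1.2 := by
  have hh := q.2.2
  rw [pathHeight_last] at hh
  have h0 : 0 ≤ pathHeight (Fin.init q.1.1) n := (isPartialMotzkin_init q.2.1) n le_rfl
  have hDC := downCount_eq_init q.1.1
  cases hs : q.1.1 (Fin.last n) with
  | H =>
    rw [hs] at hh hDC
    simp only [Step.val, add_zero] at hh
    have hmin : min q.1.2 (pathHeight (Fin.init q.1.1) n).toNat = q.1.2 := by omega
    rw [stepFwd_H e q hs, downCount_snoc, he, hDC]
    simp [hmin]
  | U =>
    by_cases hle : (q.1.2 : ℤ) ≤ pathHeight (Fin.init q.1.1) n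
    · have hmin : min q.1.2 (pathHeight (Fin.init q.1.1) n).toNat = q.1.2 := by omega
      rw [hs] at hDC
      rw [stepFwd_U_le e q hs hle, downCount_snoc, he, hDC]
      simp [hmin]
    · rw [hs] at hh hDC
      simp only [Step.val] at hh
      have hp1 : 1 ≤ q.1.2 := by omega
      have hmin : min (q.1.2 - 1) (pathHeight (Fin.init q.1.1) n).toNat = q.1.2 - 1 := by omega
      rw [stepFwd_U_gt e q hs hle, downCount_snoc, he, hDC]
      simp [hmin]
      omega
  | D =>
    rw [hs] at hh hDC
    simp only [Step.val] at hh
    have hmin : min q.1.2 (pathHeight (Fin.init q.1.1) n).toNat = q.1.2 := by omega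
    rw [stepFwd_D e q hs, downCount_snoc, he, hDC]
    simp [hmin]
    omega


/-- The elevation bijection: pairs `(P, p)` of a partial Motzkin path `P` of length `n`
(ending at height `h`) with an elevation level `p ∈ {0,…,h}` correspond bijectively to
free Motzkin paths of length `n`, and the image has `p` more down steps than `P`. -/
theorem stmt_12 (n : ℕ) :
    ∃ e : {q : (Fin n → Step) × ℕ //
            IsPartialMotzkin q.1 ∧ (q.2 : ℤ) ≤ pathHeight q.1 n} ≃ (Fin n → Step),
      ∀ q, downCount (e q) = downCount q.1.1 + q.1.2 := by
  induction n with
  | zero =>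
    have h0 : ∀ (w : Fin 0 → Step) (m : ℕ), pathHeight w m = 0 := by
      intro w m
      rw [pathHeight_eq]
      simp
    refine ⟨⟨fun q => q.1.1, fun w => ⟨(w, 0), fun m _ => by rw [h0], by simp [h0]⟩,
      ?_, fun w => rfl⟩, ?_⟩
    · rintro ⟨⟨P, p⟩, hq⟩
      have hp : p = 0 := by
        have h2 := hq.2
        rw [h0] at h2
        omega
      apply Subtype.ext
      simp [hp]
    · rintro ⟨⟨P, p⟩, hq⟩
      have hp : p = 0 := by
        have h2 := hq.2
        rw [h0] at h2
        omega
      simp [hp]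
  | succ n ih =>
    obtain ⟨e, he⟩ := ih
    exact ⟨⟨stepFwd e, stepBwd e, stepBwd_stepFwd e, stepFwd_stepBwd e⟩, downCount_stepFwd e he⟩
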